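/- arXiv:2107.04809 — 4 statements merged into one kernel-verified Lean document; each statement's English description precedes it below -/
import Mathlib

section
/- For |q|<1, ∑_{k∈ℤ} q^{k(2k+1)} = (q^2;q^2)_∞^2 / (q;q)_∞, where (a;q)_∞ = ∏_{k≥0}(1-aq^k). -/
open Finset Filter Topology

namespace Stmt3Aux

lemma one_add_ne {z : ℂ} (hz : ‖z‖ < 1) : 1 + z ≠ 0 := by
  intro h
  have : z = -1 := by linear_combination h
  rw [this] at hz; simp at hz

lemma pack {u : ℕ → ℂ} (hu : Summable u) (hlt : ∀ j, ‖u j‖ < 1) :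
    Multipliable (fun j => 1 + u j) ∧ (∏' j, (1 + u j)) ≠ 0 ∧
      Tendsto (fun m => ∏ j ∈ range m, (1 + u j)) atTop (𝓝 (∏' j, (1 + u j))) := by
  have hne : ∀ j, 1 + u j ≠ 0 := fun j => one_add_ne (hlt j)
  have hlog : Summable fun j => Complex.log (1 + u j) := by
    have := hu.neg.clog_one_sub
    simpa [sub_neg_eq_add] using this
  have hm : Multipliable (fun j => 1 + u j) :=
    Complex.multipliable_of_summable_log hlog
  have h0 : (∏' j, (1 + u j)) ≠ 0 := by
    have := Complex.cexp_tsum_eq_tprod hne hlog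
    rw [← this]
    exact Complex.exp_ne_zero _
  exact ⟨hm, h0, hm.hasProd.tendsto_prod_nat⟩

lemma exists_bounds {u : ℕ → ℂ} (hu : Summable u) (hlt : ∀ j, ‖u j‖ < 1) :
    ∃ c C : ℝ, 0 < c ∧ ∀ m, c ≤ ‖∏ j ∈ range m, (1 + u j)‖ ∧
      ‖∏ j ∈ range m, (1 + u j)‖ ≤ C := by
  obtain ⟨hm, h0, htend⟩ := pack hu hlt
  set P := ∏' j, (1 + u j) with hP
  have hnorm : Tendsto (fun m => ‖∏ j ∈ range m, (1 + u j)‖) atTop (𝓝 ‖P‖) :=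
    htend.norm
  have hPpos : 0 < ‖P‖ := norm_pos_iff.mpr h0
  have hev : ∀ᶠ m in atTop, ‖P‖/2 < ‖∏ j ∈ range m, (1 + u j)‖ ∧
      ‖∏ j ∈ range m, (1 + u j)‖ < ‖P‖ + 1 := by
    filter_upwards [hnorm.eventually (eventually_gt_nhds (by linarith : ‖P‖/2 < ‖P‖)),
      hnorm.eventually (eventually_lt_nhds (by linarith : ‖P‖ < ‖P‖ + 1))] with m h1 h2
    exact ⟨h1, h2⟩
  obtain ⟨N, hN⟩ := eventually_atTop.mp hev
  have hpos : ∀ m, 0 < ‖∏ j ∈ range m, (1 + u j)‖ := by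
    intro m
    rw [norm_pos_iff]
    exact Finset.prod_ne_zero_iff.mpr fun j _ => one_add_ne (hlt j)
  classical
  set s : Finset ℝ := insert (‖P‖/2) ((range N).image (fun m => ‖∏ j ∈ range m, (1 + u j)‖))
    with hs
  have hsne : s.Nonempty := insert_nonempty _ _
  set t : Finset ℝ := insert (‖P‖ + 1) ((range N).image (fun m => ‖∏ j ∈ range m, (1 + u j)‖))
    with ht
  have htne : t.Nonempty := insert_nonempty _ _
  refine ⟨s.min' hsne, t.max' htne, ?_, ?_⟩
  · rw [Finset.lt_min'_iff]
    intro y hy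
    rw [hs, Finset.mem_insert] at hy
    rcases hy with rfl | hy
    · linarith
    · obtain ⟨m, _, rfl⟩ := Finset.mem_image.mp hy
      exact hpos m
  · intro m
    constructor
    · rcases lt_or_ge m N with h | h
      · exact Finset.min'_le _ _ (by
          rw [hs]; exact Finset.mem_insert_of_mem (Finset.mem_image_of_mem _ (mem_range.mpr h)))
      · exact le_trans (Finset.min'_le _ _ (Finset.mem_insert_self _ _)) (hN m h).1.le
    · rcases lt_or_ge m N with h | h
      · exact Finset.le_max' _ _ (by
          rw [ht]; exact Finset.mem_insert_of_mem (Finset.mem_image_of_mem _ (mem_range.mpr h)))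
      · exact le_trans (hN m h).2.le (Finset.le_max' _ _ (Finset.mem_insert_self _ _))



noncomputable def poch (p : ℂ) (m : ℕ) : ℂ := ∏ j ∈ range m, (1 - p * p ^ j)

lemma poch_zero (p : ℂ) : poch p 0 = 1 := by simp [poch]

lemma poch_succ (p : ℂ) (m : ℕ) : poch p (m + 1) = poch p m * (1 - p * p ^ m) := by
  simp [poch, prod_range_succ]

lemma factor_ne {p : ℂ} (hp : ‖p‖ < 1) (j : ℕ) : 1 - p * p ^ j ≠ 0 := by
  intro h
  have h1 : p * p ^ j = 1 := by linear_combination -h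
  have : ‖p * p ^ j‖ < 1 := by
    rw [norm_mul, norm_pow]
    have h2 : ‖p‖ ^ j ≤ 1 := pow_le_one₀ (norm_nonneg _) hp.le
    nlinarith [norm_nonneg p, pow_nonneg (norm_nonneg p) j]
  rw [h1] at this; simp at this

lemma poch_ne_zero {p : ℂ} (hp : ‖p‖ < 1) (m : ℕ) : poch p m ≠ 0 :=
  Finset.prod_ne_zero_iff.mpr fun j _ => factor_ne hp j

noncomputable def Gb (p : ℂ) (n k : ℕ) : ℂ := poch p n / (poch p k * poch p (n - k))

lemma Gb_zero {p : ℂ} (hp : ‖p‖ < 1) (n : ℕ) : Gb p n 0 = 1 := by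
  simp [Gb, poch_zero, div_self (poch_ne_zero hp n)]

lemma Gb_self {p : ℂ} (hp : ‖p‖ < 1) (n : ℕ) : Gb p n n = 1 := by
  simp [Gb, poch_zero, div_self (poch_ne_zero hp n)]

lemma pascal {p : ℂ} (hp : ‖p‖ < 1) (k m : ℕ) :
    Gb p (k + 1 + m + 1) (k + 1) =
      Gb p (k + 1 + m) (k + 1) + p ^ (m + 1) * Gb p (k + 1 + m) k := by
  have e1 : k + 1 + m + 1 - (k + 1) = m + 1 := by omega
  have e2 : k + 1 + m - (k + 1) = m := by omega
  have e3 : k + 1 + m - k = m + 1 := by omega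
  unfold Gb
  rw [e1, e2, e3]
  rw [show k + 1 + m + 1 = (k + 1 + m) + 1 from rfl, poch_succ, poch_succ p m, poch_succ p k]
  have h1 := poch_ne_zero hp (k + 1 + m)
  have h2 := poch_ne_zero hp k
  have h3 := poch_ne_zero hp m
  have h4 := factor_ne hp (k + 1 + m)
  have h5 := factor_ne hp m
  have h6 := factor_ne hp k
  field_simp
  ring

lemma choose_two_succ (j : ℕ) : (j + 1).choose 2 = j.choose 2 + j := by
  rw [Nat.choose_succ_succ]
  simp [Nat.choose_one_right]
  omega

lemma cb {p : ℂ} (hp : ‖p‖ < 1) (t : ℂ) (N : ℕ) :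
    ∏ j ∈ range N, (1 + t * p ^ j) =
      ∑ k ∈ range (N + 1), p ^ (k.choose 2) * Gb p N k * t ^ k := by
  induction N with
  | zero => simp [Gb_zero hp 0]
  | succ N ih =>
    rw [prod_range_succ, ih]
    have hcoef : ∀ j, j < N →
        p ^ ((j+1).choose 2) * Gb p (N+1) (j+1) * t ^ (j+1) =
          p ^ ((j+1).choose 2) * Gb p N (j+1) * t ^ (j+1) +
            (p ^ (j.choose 2) * Gb p N j * t ^ j) * (t * p ^ N) := by
      intro j hj
      obtain ⟨m, rfl⟩ : ∃ m, N = j + 1 + m := ⟨N - (j + 1), by omega⟩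
      rw [show j + 1 + m + 1 = (j + 1 + m) + 1 from rfl, pascal hp j m, choose_two_succ]
      ring
    have htop : p ^ ((N+1).choose 2) * Gb p (N+1) (N+1) * t ^ (N+1) =
        (p ^ (N.choose 2) * Gb p N N * t ^ N) * (t * p ^ N) := by
      rw [Gb_self hp, Gb_self hp, choose_two_succ]
      ring
    rw [Finset.sum_range_succ' (fun k => p ^ (k.choose 2) * Gb p (N+1) k * t ^ k) (N+1),
        Finset.sum_range_succ (fun j => p ^ ((j+1).choose 2) * Gb p (N+1) (j+1) * t ^ (j+1)) N,
        Finset.sum_congr rfl (fun j hj => hcoef j (mem_range.mp hj)),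
        Finset.sum_add_distrib, htop,
        Finset.sum_range_succ' (fun k => p ^ (k.choose 2) * Gb p N k * t ^ k) N]
    simp only [Nat.choose_zero_succ, pow_zero, Gb_zero hp, mul_one, one_mul]
    have hfull : (∑ k ∈ range N, p ^ (k + 1).choose 2 * Gb p N (k + 1) * t ^ (k + 1)) + 1
        = ∑ x ∈ range N, p ^ x.choose 2 * Gb p N x * t ^ x
          + p ^ N.choose 2 * Gb p N N * t ^ N := by
      have h1 := Finset.sum_range_succ' (fun k => p ^ (k.choose 2) * Gb p N k * t ^ k) N
      have h2 := Finset.sum_range_succ (fun k => p ^ (k.choose 2) * Gb p N k * t ^ k) N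
      simp only [Nat.choose_zero_succ, pow_zero, Gb_zero hp, mul_one, one_mul] at h1
      linear_combination h2 - h1
    rw [← Finset.sum_mul]
    linear_combination (t * p ^ N) * hfull

lemma zpow_congr (q : ℂ) {a b : ℤ} (h : a = b) : q ^ a = q ^ b := by rw [h]

lemma prodA {q : ℂ} (hq0 : q ≠ 0) : ∀ n : ℕ,
    (∏ j ∈ range (2*n), (1 + q ^ (4*(j:ℤ) + 3 - 4*(n:ℤ)))) * q ^ (2*(n:ℤ)^2 - n)
      = ∏ m ∈ range (2*n), (1 + q ^ (2*(m:ℤ)+1)) := by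
  intro n
  induction n with
  | zero => simp
  | succ n ih =>
    have h2 : 2*(n+1) = (2*n+1)+1 := by ring
    have hg : ∀ j ∈ range (2*n), (1 + q ^ (4*((j+1:ℕ):ℤ) + 3 - 4*((n+1:ℕ):ℤ)))
        = (1 + q ^ (4*(j:ℤ) + 3 - 4*(n:ℤ))) := by
      intro j _
      congr 1
      exact zpow_congr q (by push_cast; ring)
    have e1 : (4*((2*n+1:ℕ):ℤ) + 3 - 4*((n+1:ℕ):ℤ)) = 4*(n:ℤ)+3 := by push_cast; ring
    have e2 : (4*((0:ℕ):ℤ) + 3 - 4*((n+1:ℕ):ℤ)) = -(4*(n:ℤ)+1) := by push_cast; ring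
    have e3 : (2*((n+1:ℕ):ℤ)^2 - ((n+1:ℕ):ℤ)) = (2*(n:ℤ)^2 - n) + (4*n+1) := by
      push_cast; ring
    have hcancel : (1 + q ^ (-(4*(n:ℤ)+1))) * q ^ (4*(n:ℤ)+1) = q ^ (4*(n:ℤ)+1) + 1 := by
      rw [add_mul, one_mul, zpow_neg, inv_mul_cancel₀ (zpow_ne_zero _ hq0)]
    have f1 : (2*((2*n:ℕ):ℤ)+1) = 4*(n:ℤ)+1 := by push_cast; ring
    have f2 : (2*((2*n+1:ℕ):ℤ)+1) = 4*(n:ℤ)+3 := by push_cast; ring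
    have hrhs : (2*(n+1) : ℕ) = (2*n)+1+1 := by ring
    conv_lhs => rw [h2, prod_range_succ', prod_range_succ]
    rw [Finset.prod_congr rfl hg, zpow_congr q e1, zpow_congr q e2, zpow_congr q e3,
      zpow_add₀ hq0 (2*(n:ℤ)^2 - n) (4*(n:ℤ)+1)]
    conv_rhs => rw [hrhs, prod_range_succ, prod_range_succ]
    rw [zpow_congr q f1, zpow_congr q f2, ← ih]
    linear_combination ((∏ j ∈ range (2*n), (1 + q ^ (4*(j:ℤ) + 3 - 4*(n:ℤ)))) *
      (1 + q ^ (4*(n:ℤ)+3)) * q ^ (2*(n:ℤ)^2 - (n:ℤ))) * hcancel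

lemma choose2_cast (k : ℕ) : ((k.choose 2 : ℕ) : ℤ) * 2 = k * (k - 1) := by
  induction k with
  | zero => simp
  | succ k ih =>
    rw [choose_two_succ]
    push_cast
    push_cast at ih
    linear_combination ih

lemma star {q : ℂ} (hq0 : q ≠ 0) (hq : ‖q‖ < 1) (n : ℕ) :
    ∑ k ∈ range (2*n+1), Gb (q^4) (2*n) k * q ^ (2*((k:ℤ)-n)^2 + ((k:ℤ)-n)) =
      ∏ m ∈ range (2*n), (1 + q ^ (2*(m:ℤ)+1)) := by
  have hp4 : ‖(q:ℂ)^4‖ < 1 := by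
    rw [norm_pow]
    exact pow_lt_one₀ (norm_nonneg _) hq (by norm_num)
  have hcb := cb hp4 (q ^ ((3:ℤ) - 4*(n:ℤ))) (2*n)
  have hfac : ∀ j ∈ range (2*n), 1 + q ^ ((3:ℤ) - 4*(n:ℤ)) * ((q:ℂ)^4) ^ j
      = 1 + q ^ (4*(j:ℤ) + 3 - 4*(n:ℤ)) := by
    intro j _
    congr 1
    rw [← pow_mul, ← zpow_natCast q (4*j), ← zpow_add₀ hq0]
    exact zpow_congr q (by push_cast; ring)
  have hterm : ∀ k ∈ range (2*n+1),
      ((q:ℂ)^4) ^ (k.choose 2) * Gb (q^4) (2*n) k * (q ^ ((3:ℤ) - 4*(n:ℤ))) ^ k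
        = (Gb (q^4) (2*n) k * q ^ (2*((k:ℤ)-(n:ℤ))^2 + ((k:ℤ)-n))) *
            q ^ (-(2*(n:ℤ)^2 - n)) := by
    intro k _
    have h1 : ((q:ℂ)^4) ^ (k.choose 2) = q ^ ((4*(k.choose 2) : ℕ) : ℤ) := by
      rw [zpow_natCast, pow_mul]
    have h2 : (q ^ ((3:ℤ) - 4*(n:ℤ))) ^ k = q ^ (((3:ℤ) - 4*(n:ℤ)) * k) := by
      rw [← zpow_natCast (q ^ ((3:ℤ) - 4*(n:ℤ))) k, ← zpow_mul]
    have h3 : q ^ ((4*(k.choose 2) : ℕ) : ℤ) * q ^ (((3:ℤ) - 4*(n:ℤ)) * k)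
        = q ^ (2*((k:ℤ)-(n:ℤ))^2 + ((k:ℤ)-n)) * q ^ (-(2*(n:ℤ)^2 - n)) := by
      rw [← zpow_add₀ hq0, ← zpow_add₀ hq0]
      refine zpow_congr q ?_
      have hc := choose2_cast k
      push_cast
      linear_combination 2 * hc
    rw [h1, h2]
    linear_combination Gb ((q:ℂ)^4) (2*n) k * h3
  rw [Finset.prod_congr rfl hfac, Finset.sum_congr rfl hterm, ← Finset.sum_mul] at hcb
  rw [← prodA hq0 n, hcb, mul_assoc, zpow_neg, inv_mul_cancel₀ (zpow_ne_zero _ hq0), mul_one]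

lemma norm_fac_lt {x : ℂ} (hx : ‖x‖ < 1) (j : ℕ) : ‖x * x ^ j‖ < 1 := by
  rw [norm_mul, norm_pow]
  have h2 : ‖x‖ ^ j ≤ 1 := pow_le_one₀ (norm_nonneg _) hx.le
  nlinarith [norm_nonneg x, pow_nonneg (norm_nonneg x) j]

lemma summable_geom' {x : ℂ} (hx : ‖x‖ < 1) : Summable (fun j : ℕ => x * x ^ j) :=
  (summable_geometric_of_norm_lt_one hx).mul_left x

lemma packSub {x : ℂ} (hx : ‖x‖ < 1) :
    Multipliable (fun j : ℕ => 1 - x * x ^ j) ∧ (∏' j : ℕ, (1 - x * x ^ j)) ≠ 0 ∧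
      Tendsto (poch x) atTop (𝓝 (∏' j : ℕ, (1 - x * x ^ j))) := by
  have h := pack (u := fun j => -(x * x ^ j)) (summable_geom' hx).neg
    (fun j => by simpa using norm_fac_lt hx j)
  have hcong : (fun j : ℕ => 1 + -(x * x ^ j)) = fun j : ℕ => 1 - x * x ^ j := by
    funext j; ring
  rw [hcong] at h
  exact ⟨h.1, h.2.1, h.2.2⟩

lemma poch_bounds {x : ℂ} (hx : ‖x‖ < 1) :
    ∃ c C : ℝ, 0 < c ∧ ∀ m, c ≤ ‖poch x m‖ ∧ ‖poch x m‖ ≤ C := by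
  obtain ⟨c, C, hc, h⟩ := exists_bounds (u := fun j => -(x * x ^ j)) (summable_geom' hx).neg
    (fun j => by simpa using norm_fac_lt hx j)
  refine ⟨c, C, hc, fun m => ?_⟩
  have := h m
  have hcong : ∀ m, (∏ j ∈ range m, (1 + -(x * x ^ j))) = poch x m := by
    intro m; unfold poch; exact Finset.prod_congr rfl fun j _ => by ring
  rwa [hcong] at this

lemma summable_odd {q : ℂ} (hq : ‖q‖ < 1) : Summable (fun m : ℕ => q ^ (2 * m + 1)) := by
  have h2 : ‖q ^ 2‖ < 1 := by
    rw [norm_pow]; exact pow_lt_one₀ (norm_nonneg _) hq (by norm_num)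
  have := (summable_geometric_of_norm_lt_one h2).mul_left q
  apply this.congr
  intro j
  rw [pow_add, pow_mul, pow_one, mul_comm]

lemma norm_odd_lt {q : ℂ} (hq : ‖q‖ < 1) (m : ℕ) : ‖q ^ (2 * m + 1)‖ < 1 := by
  rw [norm_pow]; exact pow_lt_one₀ (norm_nonneg _) hq (by omega)

lemma packPo {q : ℂ} (hq : ‖q‖ < 1) :
    Multipliable (fun m : ℕ => 1 + q ^ (2 * m + 1)) ∧
      (∏' m : ℕ, (1 + q ^ (2 * m + 1))) ≠ 0 ∧
      Tendsto (fun n => ∏ m ∈ range n, (1 + q ^ (2 * m + 1))) atTop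
        (𝓝 (∏' m : ℕ, (1 + q ^ (2 * m + 1)))) :=
  pack (summable_odd hq) (fun m => norm_odd_lt hq m)

lemma packO {q : ℂ} (hq : ‖q‖ < 1) :
    Multipliable (fun m : ℕ => 1 - q ^ (2 * m + 1)) ∧
      (∏' m : ℕ, (1 - q ^ (2 * m + 1))) ≠ 0 := by
  have h := pack (u := fun m => -(q ^ (2 * m + 1))) (summable_odd hq).neg
    (fun m => by simpa using norm_odd_lt hq m)
  have hcong : (fun m : ℕ => 1 + -(q ^ (2 * m + 1))) = fun m : ℕ => 1 - q ^ (2 * m + 1) := by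
    funext m; ring
  rw [hcong] at h
  exact ⟨h.1, h.2.1⟩

lemma key {q : ℂ} (hq0 : q ≠ 0) (hq : ‖q‖ < 1) :
    ∑' k : ℤ, q ^ (k * (2 * k + 1)) =
      (∏' j : ℕ, (1 - q ^ 4 * (q ^ 4) ^ j)) * (∏' m : ℕ, (1 + q ^ (2 * m + 1))) := by
  have hp : ‖(q:ℂ) ^ 4‖ < 1 := by
    rw [norm_pow]; exact pow_lt_one₀ (norm_nonneg _) hq (by norm_num)
  obtain ⟨_, hL4ne, hL4tend⟩ := packSub hp
  obtain ⟨c, C, hc, hcC⟩ := poch_bounds hp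
  obtain ⟨_, hPone, hPotend⟩ := packPo hq
  set L4 := ∏' j : ℕ, (1 - q ^ 4 * (q ^ 4) ^ j) with hL4def
  set Po := ∏' m : ℕ, (1 + q ^ (2 * m + 1)) with hPodef
  set f : ℕ → ℤ → ℂ := fun n i =>
    if i.natAbs ≤ n then Gb (q ^ 4) (2 * n) ((i + (n:ℤ)).toNat) * q ^ (i * (2 * i + 1))
    else 0 with hfdef
  have hexp0 : ∀ i : ℤ, 0 ≤ i * (2 * i + 1) := by
    intro i; rcases le_or_gt 0 i with h | h
    · nlinarith
    · nlinarith
  have hexpAbs : ∀ i : ℤ, (i.natAbs : ℤ) ≤ i * (2 * i + 1) := by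
    intro i; rcases le_or_gt 0 i with h | h
    · have h2 : i ≤ i * (2 * i + 1) := by nlinarith
      omega
    · have h2 : -i ≤ i * (2 * i + 1) := by nlinarith
      omega
  -- Step A : the tsum of `f n` equals the finite sum appearing in `star`
  have hA : ∀ n : ℕ, (∑' i : ℤ, f n i)
      = ∑ k ∈ range (2 * n + 1),
          Gb (q ^ 4) (2 * n) k * q ^ (2 * ((k:ℤ) - (n:ℤ)) ^ 2 + ((k:ℤ) - (n:ℤ))) := by
    intro n
    rw [tsum_eq_sum (s := Finset.Icc (-(n:ℤ)) (n:ℤ))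
      (by
        intro i hi
        simp only [Finset.mem_Icc] at hi
        simp only [hfdef]
        rw [if_neg (by omega)])]
    refine Finset.sum_nbij' (i := fun i : ℤ => (i + (n:ℤ)).toNat)
      (j := fun k : ℕ => (k:ℤ) - (n:ℤ)) ?_ ?_ ?_ ?_ ?_
    · intro a ha
      simp only [Finset.mem_Icc] at ha
      simp only [mem_range]
      omega
    · intro a ha
      simp only [mem_range] at ha
      simp only [Finset.mem_Icc]
      omega
    · intro a ha
      simp only [Finset.mem_Icc] at ha
      change (((a + (n:ℤ)).toNat : ℕ) : ℤ) - (n:ℤ) = a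
      omega
    · intro a ha
      simp only [mem_range] at ha
      change (((a:ℤ) - (n:ℤ) + (n:ℤ)).toNat : ℕ) = a
      omega
    · intro a ha
      simp only [Finset.mem_Icc] at ha
      simp only [hfdef]
      rw [if_pos (by omega)]
      have hcast : (((a + (n:ℤ)).toNat : ℕ) : ℤ) = a + n := Int.toNat_of_nonneg (by omega)
      rw [hcast]
      congr 1
      exact zpow_congr q (by ring)
  -- Step B : dominated convergence
  have hC0 : (0:ℝ) ≤ C := le_trans (norm_nonneg _) (hcC 0).2
  have hsum_bound : Summable (fun i : ℤ => (C / (c * c)) * ‖q‖ ^ (i * (2 * i + 1)).toNat) := by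
    apply Summable.mul_left
    have hbase : Summable (fun i : ℤ => ‖q‖ ^ i.natAbs) := by
      apply Summable.of_nat_of_neg
      · simpa using summable_geometric_of_lt_one (norm_nonneg q) hq
      · have : ∀ n : ℕ, ‖q‖ ^ ((-(n:ℤ)).natAbs) = ‖q‖ ^ n := by
          intro n; congr 1; omega
        simpa [this] using summable_geometric_of_lt_one (norm_nonneg q) hq
    apply Summable.of_nonneg_of_le (fun i => by positivity) _ hbase
    intro i
    apply pow_le_pow_of_le_one (norm_nonneg q) hq.le
    have h1 := hexpAbs i
    have h2 := hexp0 i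
    omega
  have hqe : ∀ i : ℤ, q ^ (i * (2 * i + 1)) = q ^ ((i * (2 * i + 1)).toNat) := by
    intro i
    have h0 := hexp0 i
    rw [← zpow_natCast q ((i * (2 * i + 1)).toNat)]
    exact zpow_congr q (by omega)
  have hbound : ∀ n, ∀ i : ℤ, ‖f n i‖ ≤ (C / (c * c)) * ‖q‖ ^ (i * (2 * i + 1)).toNat := by
    intro n i
    simp only [hfdef]
    split_ifs with h
    · rw [norm_mul]
      have hGb : ‖Gb (q ^ 4) (2 * n) ((i + (n:ℤ)).toNat)‖ ≤ C / (c * c) := by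
        unfold Gb
        rw [norm_div, norm_mul]
        apply div_le_div₀ hC0 (hcC _).2 (by positivity)
        exact mul_le_mul (hcC _).1 (hcC _).1 hc.le (norm_nonneg _)
      have hqn : ‖q ^ (i * (2 * i + 1))‖ = ‖q‖ ^ (i * (2 * i + 1)).toNat := by
        rw [hqe i, norm_pow]
      rw [hqn]
      exact mul_le_mul_of_nonneg_right hGb (by positivity)
    · simp only [norm_zero]
      positivity
  have h2n : Tendsto (fun n : ℕ => 2 * n) atTop atTop := by
    rw [tendsto_atTop_atTop]
    intro b
    exact ⟨b, fun n hn => by omega⟩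
  have hlim : ∀ i : ℤ, Tendsto (fun n => f n i) atTop (𝓝 (L4⁻¹ * q ^ (i * (2 * i + 1)))) := by
    intro i
    have hb : Tendsto (fun n : ℕ => (i + (n:ℤ)).toNat) atTop atTop := by
      rw [tendsto_atTop_atTop]
      intro b
      exact ⟨b + i.natAbs, fun n hn => by omega⟩
    have hcn : Tendsto (fun n : ℕ => 2 * n - (i + (n:ℤ)).toNat) atTop atTop := by
      rw [tendsto_atTop_atTop]
      intro b
      exact ⟨b + i.natAbs, fun n hn => by omega⟩
    have hGb : Tendsto (fun n => Gb (q ^ 4) (2 * n) ((i + (n:ℤ)).toNat)) atTop (𝓝 L4⁻¹) := by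
      have h1 : Tendsto (fun n => poch (q ^ 4) (2 * n)) atTop (𝓝 L4) := hL4tend.comp h2n
      have h2 : Tendsto (fun n : ℕ => poch (q ^ 4) ((i + (n:ℤ)).toNat)) atTop (𝓝 L4) :=
        hL4tend.comp hb
      have h3 : Tendsto (fun n : ℕ => poch (q ^ 4) (2 * n - (i + (n:ℤ)).toNat)) atTop (𝓝 L4) :=
        hL4tend.comp hcn
      have h4 := h1.div (h2.mul h3) (mul_ne_zero hL4ne hL4ne)
      have h5 : L4 / (L4 * L4) = L4⁻¹ := by
        field_simp
      rw [h5] at h4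
      exact h4
    have h6 := hGb.mul_const (q ^ (i * (2 * i + 1)))
    apply h6.congr'
    filter_upwards [eventually_ge_atTop i.natAbs] with n hn
    simp only [hfdef]
    rw [if_pos hn]
  have hB := tendsto_tsum_of_dominated_convergence hsum_bound hlim
    (Filter.Eventually.of_forall hbound)
  -- Step C : identify the limit of the other side
  have hPo2n : Tendsto (fun n : ℕ => ∏ m ∈ range (2 * n), (1 + q ^ (2 * m + 1))) atTop
      (𝓝 Po) := hPotend.comp h2n
  -- the sequences are equal via star
  have hEq : (fun n : ℕ => ∑' i : ℤ, f n i)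
      = fun n : ℕ => ∏ m ∈ range (2 * n), (1 + q ^ (2 * m + 1)) := by
    funext n
    rw [hA n, star hq0 hq n]
    apply Finset.prod_congr rfl
    intro m _
    have hpow : q ^ (2 * (m:ℤ) + 1) = q ^ (2 * m + 1 : ℕ) := by
      rw [← zpow_natCast q (2 * m + 1)]
      exact zpow_congr q (by push_cast; ring)
    rw [hpow]
  rw [hEq] at hB
  have huniq := tendsto_nhds_unique hB hPo2n
  rw [tsum_mul_left] at huniq
  rw [← huniq]
  rw [← mul_assoc, mul_inv_cancel₀ hL4ne, one_mul]

lemma final_products {q : ℂ} (hq0 : q ≠ 0) (hq : ‖q‖ < 1) :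
    (∏' j : ℕ, (1 - q ^ 4 * (q ^ 4) ^ j)) * (∏' m : ℕ, (1 + q ^ (2 * m + 1)))
      = (∏' k : ℕ, (1 - q ^ 2 * (q ^ 2) ^ k)) ^ 2 / (∏' k : ℕ, (1 - q * q ^ k)) := by
  have h2 : ‖(q:ℂ) ^ 2‖ < 1 := by
    rw [norm_pow]; exact pow_lt_one₀ (norm_nonneg _) hq (by norm_num)
  have h4 : ‖(q:ℂ) ^ 4‖ < 1 := by
    rw [norm_pow]; exact pow_lt_one₀ (norm_nonneg _) hq (by norm_num)
  obtain ⟨hAm, hAne, -⟩ := packSub hq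
  obtain ⟨hBm, hBne, -⟩ := packSub h2
  obtain ⟨hL4m, hL4ne, -⟩ := packSub h4
  obtain ⟨hPom, hPone, -⟩ := packPo hq
  obtain ⟨hOm, hOne⟩ := packO hq
  have hsum42 : Summable (fun k : ℕ => q ^ (4 * k + 2)) := by
    have hgeo := (summable_geometric_of_norm_lt_one h4).mul_left (q ^ 2)
    apply hgeo.congr
    intro k
    ring
  have hO2pack := pack (u := fun k => -(q ^ (4 * k + 2))) hsum42.neg
    (fun k => by
      rw [norm_neg, norm_pow]
      exact pow_lt_one₀ (norm_nonneg _) hq (by omega))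
  have hO2cong : (fun k : ℕ => 1 + -(q ^ (4 * k + 2))) = fun k : ℕ => 1 - q ^ (4 * k + 2) := by
    funext k; ring
  rw [hO2cong] at hO2pack
  obtain ⟨hO2m, hO2ne, -⟩ := hO2pack
  -- split A into even and odd factors
  have he : Multipliable fun k : ℕ => 1 - q * q ^ (2 * k) := by
    have : (fun k : ℕ => 1 - q * q ^ (2 * k)) = fun k : ℕ => 1 - q ^ (2 * k + 1) := by
      funext k; ring
    rw [this]; exact hOm
  have ho : Multipliable fun k : ℕ => 1 - q * q ^ (2 * k + 1) := by
    have : (fun k : ℕ => 1 - q * q ^ (2 * k + 1)) = fun k : ℕ => 1 - q ^ 2 * (q ^ 2) ^ k := by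
      funext k; ring
    rw [this]; exact hBm
  have hsplitA := tprod_even_mul_odd (f := fun k : ℕ => 1 - q * q ^ k) he ho
  have c1 : (∏' k : ℕ, (1 - q * q ^ (2 * k))) = ∏' k : ℕ, (1 - q ^ (2 * k + 1)) :=
    tprod_congr fun k => by ring
  have c2 : (∏' k : ℕ, (1 - q * q ^ (2 * k + 1))) = ∏' k : ℕ, (1 - q ^ 2 * (q ^ 2) ^ k) :=
    tprod_congr fun k => by ring
  rw [c1, c2] at hsplitA
  -- split B into even and odd factors
  have he2 : Multipliable fun k : ℕ => 1 - q ^ 2 * (q ^ 2) ^ (2 * k) := by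
    have : (fun k : ℕ => 1 - q ^ 2 * (q ^ 2) ^ (2 * k)) = fun k : ℕ => 1 - q ^ (4 * k + 2) := by
      funext k; ring
    rw [this]; exact hO2m
  have ho2 : Multipliable fun k : ℕ => 1 - q ^ 2 * (q ^ 2) ^ (2 * k + 1) := by
    have : (fun k : ℕ => 1 - q ^ 2 * (q ^ 2) ^ (2 * k + 1))
        = fun k : ℕ => 1 - q ^ 4 * (q ^ 4) ^ k := by
      funext k; ring
    rw [this]; exact hL4m
  have hsplitB := tprod_even_mul_odd (f := fun k : ℕ => 1 - q ^ 2 * (q ^ 2) ^ k) he2 ho2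
  have c3 : (∏' k : ℕ, (1 - q ^ 2 * (q ^ 2) ^ (2 * k))) = ∏' k : ℕ, (1 - q ^ (4 * k + 2)) :=
    tprod_congr fun k => by ring
  have c4 : (∏' k : ℕ, (1 - q ^ 2 * (q ^ 2) ^ (2 * k + 1)))
      = ∏' k : ℕ, (1 - q ^ 4 * (q ^ 4) ^ k) :=
    tprod_congr fun k => by ring
  rw [c3, c4] at hsplitB
  -- O * Po = O2
  have hOPo : (∏' k : ℕ, (1 - q ^ (2 * k + 1))) * (∏' k : ℕ, (1 + q ^ (2 * k + 1)))
      = ∏' k : ℕ, (1 - q ^ (4 * k + 2)) := by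
    rw [← hOm.tprod_mul hPom]
    exact tprod_congr fun k => by ring
  -- put everything together
  set A := ∏' k : ℕ, (1 - q * q ^ k)
  set B := ∏' k : ℕ, (1 - q ^ 2 * (q ^ 2) ^ k)
  set L4 := ∏' j : ℕ, (1 - q ^ 4 * (q ^ 4) ^ j)
  set Po := ∏' m : ℕ, (1 + q ^ (2 * m + 1))
  set O := ∏' k : ℕ, (1 - q ^ (2 * k + 1))
  set O2 := ∏' k : ℕ, (1 - q ^ (4 * k + 2))
  -- hsplitA : O * B = A ; hsplitB : O2 * L4 = B ; hOPo : O * Po = O2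
  rw [← hsplitA, ← hsplitB, ← hOPo]
  field_simp

end Stmt3Aux

/-- For `|q| < 1`, `∑_{k ∈ ℤ} q^{k(2k+1)} = (q²;q²)_∞² / (q;q)_∞`. -/
theorem stmt_3 (q : ℂ) (hq : ‖q‖ < 1) :
    ∑' k : ℤ, q ^ (k * (2 * k + 1)) =
      (∏' k : ℕ, (1 - q ^ 2 * (q ^ 2) ^ k)) ^ 2 / ∏' k : ℕ, (1 - q * q ^ k) := by
  by_cases h0 : q = 0
  · subst h0
    have hL : ∑' k : ℤ, (0:ℂ) ^ (k * (2 * k + 1)) = 1 := by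
      rw [tsum_eq_single (0:ℤ)]
      · norm_num
      · intro k hk
        apply zero_zpow
        intro hc
        rcases mul_eq_zero.mp hc with h | h
        · exact hk h
        · omega
    rw [hL]
    have hp1 : (∏' k : ℕ, (1 - (0:ℂ) ^ 2 * ((0:ℂ) ^ 2) ^ k)) = 1 := by
      have : (fun k : ℕ => 1 - (0:ℂ) ^ 2 * ((0:ℂ) ^ 2) ^ k) = fun _ : ℕ => (1:ℂ) := by
        funext k; norm_num
      rw [this, tprod_one]
    have hp2 : (∏' k : ℕ, (1 - (0:ℂ) * (0:ℂ) ^ k)) = 1 := by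
      have : (fun k : ℕ => 1 - (0:ℂ) * (0:ℂ) ^ k) = fun _ : ℕ => (1:ℂ) := by
        funext k; norm_num
      rw [this, tprod_one]
    rw [hp1, hp2]
    norm_num
  · have hq' : ‖q‖ < 1 := hq
    rw [Stmt3Aux.key h0 hq', Stmt3Aux.final_products h0 hq']
end

section
/- For |q|<1 and n ∈ ℤ, define A_n := ∑_{k∈ℤ} q^{k^2+(n-k)(n-k+1)}/(1-q^{2k-1}). Then A_{-n} = -A_n for all n ∈ ℤ; in particular A_0 = 0. -/
/-- For `0 < |q| < 1` with `1 - q^{2k-1} ≠ 0` for all `k ∈ ℤ`, the series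
`A n := ∑_{k ∈ ℤ} q^{k² + (n-k)(n-k+1)} / (1 - q^{2k-1})` satisfies
`A (-n) = -A n` for all `n ∈ ℤ`; in particular `A 0 = 0`. -/
theorem stmt_4 (q : ℂ) (hq0 : q ≠ 0) (hq : ‖q‖ < 1)
    (hden : ∀ k : ℤ, 1 - q ^ (2 * k - 1) ≠ 0)
    (A : ℤ → ℂ)
    (hA : ∀ n : ℤ, A n = ∑' k : ℤ, q ^ (k ^ 2 + (n - k) * (n - k + 1)) / (1 - q ^ (2 * k - 1))) :
    (∀ n : ℤ, A (-n) = -A n) ∧ A 0 = 0 := by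
  have key : ∀ n : ℤ, A (-n) = -A n := by
    intro n
    rw [hA, hA, ← tsum_neg,
      ← Equiv.tsum_eq (Equiv.subLeft (1:ℤ))
        (fun k : ℤ => q ^ (k ^ 2 + (-n - k) * (-n - k + 1)) / (1 - q ^ (2 * k - 1)))]
    congr 1
    funext k
    have hk : (Equiv.subLeft (1:ℤ)) k = 1 - k := rfl
    rw [hk]
    have he : (1-k)^2 + (-n-(1-k))*(-n-(1-k)+1)
        = (-(2*k-1)) + (k^2+(n-k)*(n-k+1)) := by ring
    have hd2 : 2*(1-k)-1 = -(2*k-1) := by ring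
    rw [he, hd2, zpow_add₀ hq0, zpow_neg]
    have hz : q ^ (2*k-1) ≠ 0 := zpow_ne_zero _ hq0
    have hd := hden k
    have hd' : q ^ (2*k-1) - 1 ≠ 0 := fun h => hd (by
      have : q ^ (2*k-1) = 1 := by linear_combination h
      simp [this])
    field_simp
    ring
  refine ⟨key, ?_⟩
  have h0 := key 0
  simp only [neg_zero] at h0
  linear_combination h0 / 2
end

section
/- Let P(n) be the number of strongly unimodal compositions of n with successive parts differing by exactly 1, i.e., the number of triples (x,y,z) with 1 ≤ x ≤ y, 1 ≤ z ≤ y, and n = y^2 - x(x-1)/2 - z(z-1)/2. Then for |q|<1, ∑_{n≥1} P(n)q^n = ∑_{m≥0} ∑_{u=-m}^{m} q^{(m+1)^2-u^2}/(1-q^{2m+1}). -/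
/-- `P n` counts strongly unimodal compositions of `n` with successive parts differing
by exactly 1: triples `(x, y, z)` with `1 ≤ x ≤ y`, `1 ≤ z ≤ y`,
`n = y² - x(x-1)/2 - z(z-1)/2`. -/
noncomputable def Pcount (n : ℕ) : ℕ :=
  Nat.card {p : ℤ × ℤ × ℤ //
    1 ≤ p.1 ∧ p.1 ≤ p.2.1 ∧ 1 ≤ p.2.2 ∧ p.2.2 ≤ p.2.1 ∧
      (n : ℤ) = p.2.1 ^ 2 - p.1 * (p.1 - 1) / 2 - p.2.2 * (p.2.2 - 1) / 2}

namespace SU16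

/-- triangular-ish number -/
def Tn (a : ℕ) : ℕ := a * (a + 1) / 2

lemma two_Tn (a : ℕ) : 2 * Tn a = a * (a + 1) :=
  Nat.mul_div_cancel' (Nat.even_mul_succ_self a).two_dvd

/-- weight on the `(j, a, b)` triple parametrization: `y = max a b + j + 1`,
`x = a + 1`, `z = b + 1`. -/
def WL : ℕ × ℕ × ℕ → ℕ := fun i =>
  (max i.2.1 i.2.2 + i.1 + 1) * (max i.2.1 i.2.2 + i.1 + 1) - Tn i.2.1 - Tn i.2.2

/-- weight on the `(m, u, k)` side. -/
def WR : ℕ × ℤ × ℕ → ℕ := fun x =>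
  (x.1 + 1) * (x.1 + 1) + x.2.2 * (2 * x.1 + 1) - x.2.1.natAbs * x.2.1.natAbs

lemma Tn_add_le {a b y : ℕ} (ha : a < y) (hb : b < y) : Tn a + Tn b + y ≤ y * y := by
  have h1 := two_Tn a; have h2 := two_Tn b
  have ha1 : a * (a + 1) ≤ (y - 1) * y := Nat.mul_le_mul (by omega) ha
  have hb1 : b * (b + 1) ≤ (y - 1) * y := Nat.mul_le_mul (by omega) hb
  have hy : (y - 1) * y + y = y * y := by
    cases y with
    | zero => simp
    | succ n => simp [Nat.succ_sub_one]; ring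
  omega

lemma WL_ge (j a b : ℕ) : max a b + j + 1 ≤ WL (j, a, b) := by
  have h := Tn_add_le (a := a) (b := b) (y := max a b + j + 1) (by omega) (by omega)
  simp only [WL]; omega

lemma WL_cast (j a b : ℕ) :
    (WL (j, a, b) : ℤ) = (max a b + j + 1 : ℤ) * (max a b + j + 1) - Tn a - Tn b := by
  have h := Tn_add_le (a := a) (b := b) (y := max a b + j + 1) (by omega) (by omega)
  simp only [WL]
  push_cast [Nat.cast_sub (by omega : Tn a ≤ (max a b + j + 1) * (max a b + j + 1)),
    Nat.cast_sub (by omega : Tn b ≤ (max a b + j + 1) * (max a b + j + 1) - Tn a)]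
  push_cast [Nat.cast_sub (by omega : Tn a ≤ (max a b + j + 1) * (max a b + j + 1))]
  ring

lemma WR_cast (m : ℕ) (u : ℤ) (k : ℕ) (h : u.natAbs ≤ m) :
    (WR (m, u, k) : ℤ) = ((m : ℤ) + 1) * ((m : ℤ) + 1) + (k : ℤ) * (2 * m + 1) - u * u := by
  have hle : u.natAbs * u.natAbs ≤ (m + 1) * (m + 1) :=
    Nat.mul_le_mul (by omega) (by omega)
  simp only [WR]
  push_cast [Nat.cast_sub (by omega : u.natAbs * u.natAbs ≤ (m+1)*(m+1) + k*(2*m+1))]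
  rw [abs_mul_abs_self]

/-- core quadratic identity -/
lemma keyZ (m u k y t1 t2 : ℤ) (hy : y = m + k + 1) (h : u * u + k * (k + 1) = t1 + t2) :
    (m + 1) * (m + 1) + k * (2 * m + 1) - u * u = y * y - t1 - t2 := by
  subst hy; linear_combination -h

lemma caseAB (u k t1 t2 a b : ℤ)
    (hab : (a = u + k ∧ b = k - u) ∨ (a = u + k ∧ b = u - k - 1) ∨
      (a = -u - k - 1 ∧ b = -u + k))
    (ht1 : 2 * t1 = a * (a + 1)) (ht2 : 2 * t2 = b * (b + 1)) :
    u * u + k * (k + 1) = t1 + t2 := by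
  have h2 : 2 * (u * u + k * (k + 1)) = 2 * t1 + 2 * t2 := by
    rcases hab with ⟨hA, hB⟩ | ⟨hA, hB⟩ | ⟨hA, hB⟩ <;> subst hA <;> subst hB <;>
      linear_combination -ht1 - ht2
  linarith

/-- forward map `(j,a,b) ↦ (m,u,k)` -/
def fwd : ℕ × ℕ × ℕ → ℕ × ℤ × ℕ := fun (j, a, b) =>
  if (a + b) % 2 = 0 then
    (max a b + j - (a + b) / 2,
      if b ≤ a then (((a - b) / 2 : ℕ) : ℤ) else -(((b - a) / 2 : ℕ) : ℤ),
      (a + b) / 2)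
  else
    (max a b + j - (max a b - min a b - 1) / 2,
      if b ≤ a then (((a + b + 1) / 2 : ℕ) : ℤ) else -(((a + b + 1) / 2 : ℕ) : ℤ),
      (max a b - min a b - 1) / 2)

/-- backward map `(m,u,k) ↦ (j,a,b)` -/
def bwd : ℕ × ℤ × ℕ → ℕ × ℕ × ℕ := fun (m, u, k) =>
  (m - u.natAbs,
    if -(k : ℤ) ≤ u then ((k : ℤ) + u).toNat else (-u - k - 1).toNat,
    if u ≤ (k : ℤ) then ((k : ℤ) - u).toNat else (u - k - 1).toNat)

lemma fwd_mem (i : ℕ × ℕ × ℕ) : (fwd i).2.1.natAbs ≤ (fwd i).1 := by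
  obtain ⟨j, a, b⟩ := i
  simp only [fwd]
  split_ifs <;> simp <;> omega

lemma fwd_w (i : ℕ × ℕ × ℕ) : WR (fwd i) = WL i := by
  obtain ⟨j, a, b⟩ := i
  have ht1 : 2 * ((Tn a : ℕ) : ℤ) = (a : ℤ) * ((a : ℤ) + 1) := by
    exact_mod_cast congrArg (Nat.cast : ℕ → ℤ) (two_Tn a)
  have ht2 : 2 * ((Tn b : ℕ) : ℤ) = (b : ℤ) * ((b : ℤ) + 1) := by
    exact_mod_cast congrArg (Nat.cast : ℕ → ℤ) (two_Tn b)
  have hWL := WL_cast j a b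
  simp only [fwd]
  split_ifs with hpar hba hba <;>
    (refine Nat.cast_injective (R := ℤ) ?_ ;
     rw [WR_cast _ _ _ (by simp only [Int.natAbs_neg, Int.natAbs_natCast]; omega), hWL] ;
     refine keyZ _ _ _ _ _ _ (by push_cast; omega)
       (caseAB _ _ _ _ _ _ ?_ ht1 ht2)) <;> push_cast <;> omega

set_option maxHeartbeats 1000000 in
lemma bwd_fwd (i : ℕ × ℕ × ℕ) : bwd (fwd i) = i := by
  obtain ⟨j, a, b⟩ := i
  simp only [fwd, bwd]
  split_ifs <;> simp only [Prod.mk.injEq, Int.natAbs_neg, Int.natAbs_natCast] <;> omega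

set_option maxHeartbeats 1000000 in
lemma fwd_bwd (x : ℕ × ℤ × ℕ) (h : x.2.1.natAbs ≤ x.1) : fwd (bwd x) = x := by
  obtain ⟨m, u, k⟩ := x
  dsimp only at h
  simp only [fwd, bwd]
  split_ifs <;> simp only [Prod.mk.injEq] <;> omega

/-- the set of valid `(m,u,k)` -/
def SR : Set (ℕ × ℤ × ℕ) := {x | x.2.1.natAbs ≤ x.1}

/-- global equivalence -/
def EE : (ℕ × ℕ × ℕ) ≃ SR where
  toFun i := ⟨fwd i, fwd_mem i⟩
  invFun x := bwd x.1
  left_inv i := bwd_fwd i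
  right_inv x := Subtype.ext (fwd_bwd x.1 x.2)

lemma WL_pos (i : ℕ × ℕ × ℕ) : 1 ≤ WL i := by
  obtain ⟨j, a, b⟩ := i
  have := WL_ge j a b
  omega

/-- the fiber equivalence with the `Pcount` subtype -/
lemma weight_iff (x y z : ℤ) (N : ℕ) (j a b : ℕ) (hx : 1 ≤ x) (hxy : x ≤ y) (hz : 1 ≤ z)
    (hzy : z ≤ y) (ha : (a : ℤ) = x - 1) (hb : (b : ℤ) = z - 1) (hj : (j : ℤ) = y - max x z) :
    ((N : ℤ) = y ^ 2 - x * (x - 1) / 2 - z * (z - 1) / 2) ↔ WL (j, a, b) = N := by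
  obtain ⟨e1, he1⟩ : ∃ e, x * (x - 1) = 2 * e := by
    obtain ⟨e, he⟩ := Int.even_mul_succ_self (x - 1)
    exact ⟨e, by linear_combination he⟩
  obtain ⟨e2, he2⟩ : ∃ e, z * (z - 1) = 2 * e := by
    obtain ⟨e, he⟩ := Int.even_mul_succ_self (z - 1)
    exact ⟨e, by linear_combination he⟩
  have hd1 : x * (x - 1) / 2 = e1 := by rw [he1]; exact Int.mul_ediv_cancel_left _ two_ne_zero
  have hd2 : z * (z - 1) / 2 = e2 := by rw [he2]; exact Int.mul_ediv_cancel_left _ two_ne_zero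
  have hy' : ((max a b + j + 1 : ℕ) : ℤ) = y := by push_cast; omega
  have hWL := WL_cast j a b
  have ht1 : ((Tn a : ℕ) : ℤ) = e1 := by
    have hc1 := congrArg (Nat.cast : ℕ → ℤ) (two_Tn a)
    push_cast at hc1
    have hx' : x = (a : ℤ) + 1 := by omega
    rw [hx'] at he1
    have hc2 : (a:ℤ) * (a + 1) = 2 * e1 := by linear_combination he1
    omega
  have ht2 : ((Tn b : ℕ) : ℤ) = e2 := by
    have hc1 := congrArg (Nat.cast : ℕ → ℤ) (two_Tn b)
    push_cast at hc1
    have hz' : z = (b : ℤ) + 1 := by omega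
    rw [hz'] at he2
    have hc2 : (b:ℤ) * (b + 1) = 2 * e2 := by linear_combination he2
    omega
  rw [hd1, hd2, sq]
  have hyy : ((max a b : ℕ) : ℤ) + (j : ℤ) + 1 = y := by push_cast; omega
  rw [hyy] at hWL
  constructor
  · intro h
    have hfin : (WL (j, a, b) : ℤ) = (N : ℤ) := by rw [hWL]; omega
    exact_mod_cast hfin
  · intro h
    have hc : (WL (j, a, b) : ℤ) = (N : ℤ) := by exact_mod_cast congrArg (Nat.cast : ℕ → ℤ) h
    rw [hWL] at hc
    omega

def Pe (n : ℕ) :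
    {p : ℤ × ℤ × ℤ //
      1 ≤ p.1 ∧ p.1 ≤ p.2.1 ∧ 1 ≤ p.2.2 ∧ p.2.2 ≤ p.2.1 ∧
        ((n + 1 : ℕ) : ℤ) = p.2.1 ^ 2 - p.1 * (p.1 - 1) / 2 - p.2.2 * (p.2.2 - 1) / 2} ≃
    {i : ℕ × ℕ × ℕ // WL i = n + 1} where
  toFun p := ⟨((p.1.2.1 - max p.1.1 p.1.2.2).toNat, (p.1.1 - 1).toNat, (p.1.2.2 - 1).toNat), by
    obtain ⟨⟨x, y, z⟩, hx, hxy, hz, hzy, hw⟩ := p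
    dsimp only at hx hxy hz hzy hw ⊢
    exact (weight_iff x y z (n + 1) _ _ _ hx hxy hz hzy (by omega) (by omega)
      (by omega)).mp hw⟩
  invFun i := ⟨(((i.1.2.1 + 1 : ℕ) : ℤ), ((max i.1.2.1 i.1.2.2 + i.1.1 + 1 : ℕ) : ℤ),
      ((i.1.2.2 + 1 : ℕ) : ℤ)), by
    obtain ⟨⟨j, a, b⟩, hw⟩ := i
    dsimp only at hw ⊢
    refine ⟨by push_cast; omega, by push_cast; omega, by push_cast; omega,
      by push_cast; omega, ?_⟩
    exact (weight_iff _ _ _ (n + 1) j a b (by push_cast; omega) (by push_cast; omega)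
      (by push_cast; omega) (by push_cast; omega) (by push_cast; omega)
      (by push_cast; omega) (by push_cast; omega)).mpr hw⟩
  left_inv p := by
    obtain ⟨⟨x, y, z⟩, hx, hxy, hz, hzy, hw⟩ := p
    refine Subtype.ext ?_
    dsimp only at hx hxy hz hzy ⊢
    simp only [Prod.mk.injEq]
    push_cast
    omega
  right_inv i := by
    obtain ⟨⟨j, a, b⟩, hw⟩ := i
    refine Subtype.ext ?_
    dsimp only
    simp only [Prod.mk.injEq]
    push_cast
    omega

lemma group {ι : Type*} (w : ι → ℕ) (f : ℕ → ℂ) (hs : Summable fun i => f (w i)) :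
    ∑' i, f (w i) = ∑' n, (Nat.card {i // w i = n} : ℂ) * f n := by
  have hs' : Summable fun p : Σ n : ℕ, {i // w i = n} =>
      f (w ((Equiv.sigmaFiberEquiv w) p)) :=
    ((Equiv.sigmaFiberEquiv w).summable_iff).2 hs
  have h1 : ∑' i, f (w i) = ∑' p : Σ n : ℕ, {i // w i = n},
      f (w ((Equiv.sigmaFiberEquiv w) p)) :=
    ((Equiv.sigmaFiberEquiv w).tsum_eq fun i => f (w i)).symm
  rw [h1, hs'.tsum_sigma]
  refine tsum_congr fun n => ?_
  calc ∑' c : {i // w i = n}, f (w ((Equiv.sigmaFiberEquiv w) ⟨n, c⟩))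
      = ∑' _c : {i // w i = n}, f n := tsum_congr fun c => by
        show f (w c.1) = f n
        rw [c.2]
    _ = (Nat.card {i // w i = n}) • f n := tsum_const _
    _ = _ := nsmul_eq_mul _ _

lemma group_summable {ι : Type*} (w : ι → ℕ) (f : ℕ → ℂ)
    (hs : Summable fun i => f (w i)) :
    Summable fun n => (Nat.card {i // w i = n} : ℂ) * f n := by
  have hs' : Summable fun p : Σ n : ℕ, {i // w i = n} =>
      f (w ((Equiv.sigmaFiberEquiv w) p)) :=
    ((Equiv.sigmaFiberEquiv w).summable_iff).2 hs
  have h2 := hs'.sigma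
  refine h2.congr fun n => ?_
  calc ∑' c : {i // w i = n}, f (w ((Equiv.sigmaFiberEquiv w) ⟨n, c⟩))
      = ∑' _c : {i // w i = n}, f n := tsum_congr fun c => by
        show f (w c.1) = f n
        rw [c.2]
    _ = (Nat.card {i // w i = n}) • f n := tsum_const _
    _ = _ := nsmul_eq_mul _ _

end SU16

/-- For `|q| < 1`:
`∑_{n≥1} P(n) qⁿ = ∑_{m≥0} ∑_{u=-m}^{m} q^{(m+1)²-u²}/(1-q^{2m+1})`. -/
theorem stmt_16 (q : ℂ) (hq : ‖q‖ < 1) :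
    ∑' n : ℕ, (Pcount (n + 1) : ℂ) * q ^ (n + 1) =
      ∑' m : ℕ, ∑ u ∈ Finset.Icc (-(m : ℤ)) (m : ℤ),
        q ^ (((m : ℤ) + 1) ^ 2 - u ^ 2) / (1 - q ^ (2 * m + 1)) := by
  classical
  have hqn : ‖q‖ < 1 := by exact hq
  set r := Real.sqrt ‖q‖ with hr
  have hr0 : 0 ≤ r := Real.sqrt_nonneg _
  have hrr : r * r = ‖q‖ := Real.mul_self_sqrt (norm_nonneg q)
  have hr1 : r < 1 := by nlinarith
  -- summability of the master series
  have hSL : Summable fun i : ℕ × ℕ × ℕ => q ^ SU16.WL i := by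
    apply Summable.of_norm
    have hb : ∀ i : ℕ × ℕ × ℕ,
        ‖q ^ SU16.WL i‖ ≤ (r * r) ^ i.1 * (r ^ i.2.1 * r ^ i.2.2) := by
      rintro ⟨j, a, b⟩
      have hge := SU16.WL_ge j a b
      have hexp : 2 * j + (a + b) ≤ 2 * SU16.WL (j, a, b) := by omega
      calc ‖q ^ SU16.WL (j, a, b)‖ = ‖q‖ ^ SU16.WL (j, a, b) := norm_pow _ _
        _ = r ^ (2 * SU16.WL (j, a, b)) := by rw [pow_mul, sq, hrr]
        _ ≤ r ^ (2 * j + (a + b)) := pow_le_pow_of_le_one hr0 hr1.le hexp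
        _ = (r * r) ^ j * (r ^ a * r ^ b) := by rw [pow_add, pow_add, pow_mul, sq]
    refine Summable.of_nonneg_of_le (fun i => norm_nonneg _) hb ?_
    have hg1 : Summable (fun a : ℕ => r ^ a) := summable_geometric_of_lt_one hr0 hr1
    have hg2 : Summable (fun j : ℕ => (r * r) ^ j) :=
      summable_geometric_of_lt_one (by positivity) (by nlinarith)
    have hpos1 : (0 : ℕ → ℝ) ≤ fun a : ℕ => r ^ a := Pi.le_def.mpr fun a => by positivity
    have h2 : Summable (fun p : ℕ × ℕ => r ^ p.1 * r ^ p.2) :=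
      hg1.mul_of_nonneg hg1 hpos1 hpos1
    exact hg2.mul_of_nonneg h2 (Pi.le_def.mpr fun j => by positivity)
      (Pi.le_def.mpr fun p => by positivity)
  -- Left-hand side
  have hL : ∑' n : ℕ, (Pcount (n + 1) : ℂ) * q ^ (n + 1) =
      ∑' i : ℕ × ℕ × ℕ, q ^ SU16.WL i := by
    have hg := SU16.group SU16.WL (fun n => q ^ n) hSL
    have hgs := SU16.group_summable SU16.WL (fun n => q ^ n) hSL
    rw [hg, hgs.tsum_eq_zero_add]
    have h0 : (Nat.card {i : ℕ × ℕ × ℕ // SU16.WL i = 0} : ℂ) * q ^ 0 = 0 := by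
      have he : IsEmpty {i : ℕ × ℕ × ℕ // SU16.WL i = 0} :=
        ⟨fun c => by have := SU16.WL_pos c.1; omega⟩
      simp [Nat.card_of_isEmpty]
    rw [h0, zero_add]
    refine tsum_congr fun n => ?_
    have hcard : Pcount (n + 1) = Nat.card {i : ℕ × ℕ × ℕ // SU16.WL i = n + 1} :=
      Nat.card_congr (SU16.Pe n)
    rw [hcard]
  -- transport to the (m,u,k) side
  have hcomp : (fun i : ℕ × ℕ × ℕ => q ^ SU16.WL i) =
      (fun x : SU16.SR => q ^ SU16.WR x.1) ∘ SU16.EE := by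
    funext i
    simp only [Function.comp_apply, SU16.EE, Equiv.coe_fn_mk, SU16.fwd_w]
  have hSR : Summable fun x : SU16.SR => q ^ SU16.WR x.1 :=
    (SU16.EE.summable_iff).1 (hcomp ▸ hSL)
  have hEq1 : ∑' i : ℕ × ℕ × ℕ, q ^ SU16.WL i = ∑' x : SU16.SR, q ^ SU16.WR x.1 := by
    rw [← SU16.EE.tsum_eq (fun x : SU16.SR => q ^ SU16.WR x.1)]
    refine tsum_congr fun i => ?_
    simp only [SU16.EE, Equiv.coe_fn_mk, SU16.fwd_w]
  set F : ℕ × ℤ × ℕ → ℂ := fun x => if x.2.1.natAbs ≤ x.1 then q ^ SU16.WR x else 0 with hF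
  have hFind : (SU16.SR.indicator fun x => q ^ SU16.WR x) = F := by
    funext x
    by_cases h : x ∈ SU16.SR <;>
      simp [Set.indicator, h, hF, SU16.SR] <;>
      simp only [SU16.SR, Set.mem_setOf_eq] at h <;> simp [h]
  have hind : ∑' x : SU16.SR, q ^ SU16.WR x.1 = ∑' x : ℕ × ℤ × ℕ, F x := by
    exact (tsum_subtype SU16.SR fun x => q ^ SU16.WR x).trans (by rw [hFind])
  have hFs : Summable F := by
    rw [← hFind]
    exact (summable_subtype_iff_indicator).1 hSR
  have hsplit : ∑' x : ℕ × ℤ × ℕ, F x = ∑' m : ℕ, ∑' w : ℤ × ℕ, F (m, w) := hFs.tsum_prod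
  have hm : ∀ m : ℕ, ∑' w : ℤ × ℕ, F (m, w) =
      ∑ u ∈ Finset.Icc (-(m : ℤ)) (m : ℤ),
        q ^ (((m : ℤ) + 1) ^ 2 - u ^ 2) / (1 - q ^ (2 * m + 1)) := by
    intro m
    have hfm : Summable fun w : ℤ × ℕ => F (m, w) := hFs.prod_factor m
    rw [hfm.tsum_prod]
    rw [tsum_eq_sum (s := Finset.Icc (-(m : ℤ)) (m : ℤ))
      (by
        intro u hu
        have hgt : ¬ u.natAbs ≤ m := by
          simp only [Finset.mem_Icc] at hu; omega
        simp [hF, hgt])]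
    refine Finset.sum_congr rfl fun u hu => ?_
    have hum : u.natAbs ≤ m := by simp only [Finset.mem_Icc] at hu; omega
    have hsq : u.natAbs * u.natAbs ≤ (m + 1) * (m + 1) :=
      Nat.mul_le_mul (by omega) (by omega)
    have h1 : ∀ k : ℕ, F (m, u, k) =
        q ^ ((m + 1) * (m + 1) - u.natAbs * u.natAbs) * (q ^ (2 * m + 1)) ^ k := by
      intro k
      have hWRk : SU16.WR (m, u, k) =
          ((m + 1) * (m + 1) - u.natAbs * u.natAbs) + (2 * m + 1) * k := by
        simp only [SU16.WR]
        have hco : k * (2 * m + 1) = (2 * m + 1) * k := Nat.mul_comm _ _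
        omega
      simp only [hF, if_pos hum, hWRk, pow_add, pow_mul]
    rw [tsum_congr h1, tsum_mul_left,
      tsum_geometric_of_norm_lt_one (by
        rw [norm_pow]; exact pow_lt_one₀ (norm_nonneg q) hqn (by omega))]
    have hz : (((m : ℤ) + 1) ^ 2 - u ^ 2) =
        (((m + 1) * (m + 1) - u.natAbs * u.natAbs : ℕ) : ℤ) := by
      push_cast [Nat.cast_sub hsq]
      rw [abs_mul_abs_self]
      ring
    rw [hz, zpow_natCast, div_eq_mul_inv]
  rw [hL, hEq1, hind, hsplit]
  exact tsum_congr hm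
end

section
/- Let P(n) := #{(x,y,z): 1≤x≤y, 1≤z≤y, n = y^2 - x(x-1)/2 - z(z-1)/2} and Q(n) := #{(l,m,k): l≥1, 1≤m≤l, k≥0, n = l(l+1)/2 - m(m-1)/2 + kl}. Then Q(n) = P(2n) for all positive integers n. -/
/-- `Q n` counts triples `(l, m, k)` with `l ≥ 1`, `1 ≤ m ≤ l`, `k ≥ 0`,
`n = l(l+1)/2 - m(m-1)/2 + k·l`. -/
noncomputable def Qcount (n : ℕ) : ℕ :=
  Nat.card {p : ℤ × ℤ × ℤ //
    1 ≤ p.1 ∧ 1 ≤ p.2.1 ∧ p.2.1 ≤ p.1 ∧ 0 ≤ p.2.2 ∧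
      (n : ℤ) = p.1 * (p.1 + 1) / 2 - p.2.1 * (p.2.1 - 1) / 2 + p.2.2 * p.1}


private lemma even_mul_pred (m : ℤ) : ∃ B : ℤ, m * (m - 1) = 2 * B := by
  obtain ⟨B, hB⟩ := Int.even_mul_succ_self (m - 1)
  exact ⟨B, by linear_combination hB⟩

private lemma even_mul_succ (l : ℤ) : ∃ A : ℤ, l * (l + 1) = 2 * A := by
  obtain ⟨A, hA⟩ := Int.even_mul_succ_self l
  exact ⟨A, by linear_combination hA⟩

private def QP (n : ℕ) (p : ℤ × ℤ × ℤ) : Prop :=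
  1 ≤ p.1 ∧ 1 ≤ p.2.1 ∧ p.2.1 ≤ p.1 ∧ 0 ≤ p.2.2 ∧
    (n : ℤ) = p.1 * (p.1 + 1) / 2 - p.2.1 * (p.2.1 - 1) / 2 + p.2.2 * p.1

private def PP (n : ℕ) (p : ℤ × ℤ × ℤ) : Prop :=
  1 ≤ p.1 ∧ p.1 ≤ p.2.1 ∧ 1 ≤ p.2.2 ∧ p.2.2 ≤ p.2.1 ∧
    (n : ℤ) = p.2.1 ^ 2 - p.1 * (p.1 - 1) / 2 - p.2.2 * (p.2.2 - 1) / 2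

private lemma QP_iff (n : ℕ) (l m k : ℤ) :
    QP n (l, m, k) ↔ 1 ≤ l ∧ 1 ≤ m ∧ m ≤ l ∧ 0 ≤ k ∧
      4 * (n : ℤ) = 2 * (l * (l + 1)) - 2 * (m * (m - 1)) + 4 * (k * l) := by
  unfold QP
  dsimp only
  obtain ⟨A, hA⟩ := even_mul_succ l
  obtain ⟨B, hB⟩ := even_mul_pred m
  constructor
  · rintro ⟨h1, h2, h3, h4, h5⟩
    refine ⟨h1, h2, h3, h4, ?_⟩
    rw [hA, hB] at h5 ⊢
    generalize hK : k * l = K at *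
    omega
  · rintro ⟨h1, h2, h3, h4, h5⟩
    refine ⟨h1, h2, h3, h4, ?_⟩
    rw [hA, hB] at h5 ⊢
    generalize hK : k * l = K at *
    omega

private lemma PP_iff (N : ℕ) (x y z : ℤ) :
    PP N (x, y, z) ↔ 1 ≤ x ∧ x ≤ y ∧ 1 ≤ z ∧ z ≤ y ∧
      2 * (N : ℤ) = 2 * (y * y) - x * (x - 1) - z * (z - 1) := by
  unfold PP
  dsimp only
  obtain ⟨A, hA⟩ := even_mul_pred x
  obtain ⟨B, hB⟩ := even_mul_pred z
  rw [sq]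
  constructor
  · rintro ⟨h1, h2, h3, h4, h5⟩
    refine ⟨h1, h2, h3, h4, ?_⟩
    rw [hA, hB] at h5 ⊢
    generalize hY : y * y = Y at *
    omega
  · rintro ⟨h1, h2, h3, h4, h5⟩
    refine ⟨h1, h2, h3, h4, ?_⟩
    rw [hA, hB] at h5 ⊢
    generalize hY : y * y = Y at *
    omega

-- parity lemma: if 2*M = y*y - a*a - E with E even, then y - a is even
private lemma parity_aux (M y a E : ℤ) (hE : ∃ e, E = 2 * e)
    (h : 2 * M = y * y - a * a - E) : (y - a) % 2 = 0 := by
  obtain ⟨e, rfl⟩ := hE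
  have hev : Even ((y - a) * (y + a)) := ⟨M + e, by linear_combination -h⟩
  rcases Int.even_mul.mp hev with h' | h' <;>
    · obtain ⟨t, ht⟩ := h'
      omega

private def Fmap (p : ℤ × ℤ × ℤ) : ℤ × ℤ × ℤ :=
  let l := p.1; let m := p.2.1; let k := p.2.2
  if l % 2 = 0 then
    let Y := l - m + k + 1 + l / 2
    if 3*l + 2*k + 4 ≤ 4*m then (Y - (3*l - 3*m + 2*k + 2), Y, Y - (l - m + 2*k + 1))
    else if l ≤ 2*k then
      if 2*m ≤ l then (Y - (2*l - m), Y, Y - (m - 1))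
      else (Y - (m - 1), Y, Y - (2*l - m))
    else (Y - (l - m + 2*k + 1), Y, Y - (m - 1))
  else
    let Y := (3*l - 2*m + 4*k + 3) / 2
    if 3*l + 4*k + 4 < 4*m then (Y - (l - m), Y, Y - (3*l - 3*m + 4*k + 3))
    else (Y - (l - m), Y, Y - (m - 1))

private def Gmap (p : ℤ × ℤ × ℤ) : ℤ × ℤ × ℤ :=
  let x := p.1; let y := p.2.1; let z := p.2.2
  let s := 2*y - x - z + 1
  if s % 2 = 0 then
    if 0 < z - x then
      if z - x < s/2 then (2*y - s/2, 2*y - s/2 - (z - x - 1)/2, s/4 - (z - x - 1)/2 - 1)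
      else (s/2, s/2 - (z - x - 1)/2, (2*y - s/2)/2 - (z - x - 1)/2 - 1)
    else
      if x - z < s/2 then (s/2, s/2 - (x - z - 1)/2, (2*y - s/2)/2 - (x - z - 1)/2 - 1)
      else (2*y + z - x, 2*y + z - x - (s - (x - z) - 1)/2, s/4 - (s - (x - z) - 1)/2 - 1)
  else
    if x + z - 1 < y + (z - x)/2 then
      (y - (z - x)/2, y - (z - x)/2 - (x + z - 2)/2, (y + (z - x)/2)/2 - (x + z - 2)/2 - 1)
    else
      (2*y + 1 - x - z, 2*y + 1 - x - z - (2*(y + (z - x)/2) - x - z)/2,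
        (y + (z - x)/2)/2 - (2*(y + (z - x)/2) - x - z)/2 - 1)

private lemma Fmem (n : ℕ) (l m k : ℤ) (h : QP n (l, m, k)) : PP (2*n) (Fmap (l, m, k)) := by
  rw [QP_iff] at h
  obtain ⟨h1, h2, h3, h4, heq⟩ := h
  have hcast : ((2*n : ℕ) : ℤ) = 2*(n:ℤ) := by push_cast; ring
  by_cases hl : l % 2 = 0
  · obtain ⟨l0, rfl⟩ : ∃ t, l = 2*t := ⟨l/2, by omega⟩
    by_cases g1 : 3*(2*l0) + 2*k + 4 ≤ 4*m
    · have himg : Fmap (2*l0, m, k) = (2*m - 3*l0 - k - 1, 3*l0 - m + k + 1, l0 - k) := by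
        simp only [Fmap]
        split_ifs <;> first
          | (exfalso; omega)
          | (simp only [Prod.mk.injEq]; exact ⟨by omega, by omega, by omega⟩)
      rw [himg, PP_iff]
      refine ⟨by omega, by omega, by omega, by omega, ?_⟩
      rw [hcast]
      linear_combination heq
    · by_cases g2 : 2*l0 ≤ 2*k
      · by_cases g3 : 2*m ≤ 2*l0
        · have himg : Fmap (2*l0, m, k) = (k + 1 - l0, 3*l0 - m + k + 1, 3*l0 - 2*m + k + 2) := by
            simp only [Fmap]
            split_ifs <;> first
              | (exfalso; omega)
              | (simp only [Prod.mk.injEq]; exact ⟨by omega, by omega, by omega⟩)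
          rw [himg, PP_iff]
          refine ⟨by omega, by omega, by omega, by omega, ?_⟩
          rw [hcast]
          linear_combination heq
        · have himg : Fmap (2*l0, m, k) = (3*l0 - 2*m + k + 2, 3*l0 - m + k + 1, k + 1 - l0) := by
            simp only [Fmap]
            split_ifs <;> first
              | (exfalso; omega)
              | (simp only [Prod.mk.injEq]; exact ⟨by omega, by omega, by omega⟩)
          rw [himg, PP_iff]
          refine ⟨by omega, by omega, by omega, by omega, ?_⟩
          rw [hcast]
          linear_combination heq
      · have himg : Fmap (2*l0, m, k) = (l0 - k, 3*l0 - m + k + 1, 3*l0 - 2*m + k + 2) := by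
          simp only [Fmap]
          split_ifs <;> first
            | (exfalso; omega)
            | (simp only [Prod.mk.injEq]; exact ⟨by omega, by omega, by omega⟩)
        rw [himg, PP_iff]
        refine ⟨by omega, by omega, by omega, by omega, ?_⟩
        rw [hcast]
        linear_combination heq
  · obtain ⟨l0, rfl⟩ : ∃ t, l = 2*t + 1 := ⟨l/2, by omega⟩
    by_cases g5 : 3*(2*l0+1) + 4*k + 4 < 4*m
    · have himg : Fmap (2*l0+1, m, k) = (l0 + 2*k + 2, 3*l0 - m + 2*k + 3, 2*m - 3*l0 - 2*k - 3) := by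
        simp only [Fmap]
        split_ifs <;> first
          | (exfalso; omega)
          | (simp only [Prod.mk.injEq]; exact ⟨by omega, by omega, by omega⟩)
      rw [himg, PP_iff]
      refine ⟨by omega, by omega, by omega, by omega, ?_⟩
      rw [hcast]
      linear_combination heq
    · have himg : Fmap (2*l0+1, m, k) = (l0 + 2*k + 2, 3*l0 - m + 2*k + 3, 3*l0 - 2*m + 2*k + 4) := by
        simp only [Fmap]
        split_ifs <;> first
          | (exfalso; omega)
          | (simp only [Prod.mk.injEq]; exact ⟨by omega, by omega, by omega⟩)
      rw [himg, PP_iff]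
      refine ⟨by omega, by omega, by omega, by omega, ?_⟩
      rw [hcast]
      linear_combination heq

private lemma GFlem (n : ℕ) (l m k : ℤ) (h : QP n (l, m, k)) :
    Gmap (Fmap (l, m, k)) = (l, m, k) := by
  rw [QP_iff] at h
  obtain ⟨h1, h2, h3, h4, heq⟩ := h
  by_cases hl : l % 2 = 0
  · obtain ⟨l0, rfl⟩ : ∃ t, l = 2*t := ⟨l/2, by omega⟩
    by_cases g1 : 3*(2*l0) + 2*k + 4 ≤ 4*m
    · have himg : Fmap (2*l0, m, k) = (2*m - 3*l0 - k - 1, 3*l0 - m + k + 1, l0 - k) := by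
        simp only [Fmap]
        split_ifs <;> first
          | (exfalso; omega)
          | (simp only [Prod.mk.injEq]; exact ⟨by omega, by omega, by omega⟩)
      rw [himg]
      simp only [Gmap]
      split_ifs <;> first
        | (exfalso; omega)
        | (simp only [Prod.mk.injEq]; exact ⟨by omega, by omega, by omega⟩)
    · by_cases g2 : 2*l0 ≤ 2*k
      · by_cases g3 : 2*m ≤ 2*l0
        · have himg : Fmap (2*l0, m, k) = (k + 1 - l0, 3*l0 - m + k + 1, 3*l0 - 2*m + k + 2) := by
            simp only [Fmap]
            split_ifs <;> first
              | (exfalso; omega)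
              | (simp only [Prod.mk.injEq]; exact ⟨by omega, by omega, by omega⟩)
          rw [himg]
          simp only [Gmap]
          split_ifs <;> first
            | (exfalso; omega)
            | (simp only [Prod.mk.injEq]; exact ⟨by omega, by omega, by omega⟩)
        · have himg : Fmap (2*l0, m, k) = (3*l0 - 2*m + k + 2, 3*l0 - m + k + 1, k + 1 - l0) := by
            simp only [Fmap]
            split_ifs <;> first
              | (exfalso; omega)
              | (simp only [Prod.mk.injEq]; exact ⟨by omega, by omega, by omega⟩)
          rw [himg]
          simp only [Gmap]
          split_ifs <;> first
            | (exfalso; omega)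
            | (simp only [Prod.mk.injEq]; exact ⟨by omega, by omega, by omega⟩)
      · have himg : Fmap (2*l0, m, k) = (l0 - k, 3*l0 - m + k + 1, 3*l0 - 2*m + k + 2) := by
          simp only [Fmap]
          split_ifs <;> first
            | (exfalso; omega)
            | (simp only [Prod.mk.injEq]; exact ⟨by omega, by omega, by omega⟩)
        rw [himg]
        simp only [Gmap]
        split_ifs <;> first
          | (exfalso; omega)
          | (simp only [Prod.mk.injEq]; exact ⟨by omega, by omega, by omega⟩)
  · obtain ⟨l0, rfl⟩ : ∃ t, l = 2*t + 1 := ⟨l/2, by omega⟩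
    by_cases g5 : 3*(2*l0+1) + 4*k + 4 < 4*m
    · have himg : Fmap (2*l0+1, m, k) = (l0 + 2*k + 2, 3*l0 - m + 2*k + 3, 2*m - 3*l0 - 2*k - 3) := by
        simp only [Fmap]
        split_ifs <;> first
          | (exfalso; omega)
          | (simp only [Prod.mk.injEq]; exact ⟨by omega, by omega, by omega⟩)
      rw [himg]
      simp only [Gmap]
      split_ifs <;> first
        | (exfalso; omega)
        | (simp only [Prod.mk.injEq]; exact ⟨by omega, by omega, by omega⟩)
    · have himg : Fmap (2*l0+1, m, k) = (l0 + 2*k + 2, 3*l0 - m + 2*k + 3, 3*l0 - 2*m + 2*k + 4) := by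
        simp only [Fmap]
        split_ifs <;> first
          | (exfalso; omega)
          | (simp only [Prod.mk.injEq]; exact ⟨by omega, by omega, by omega⟩)
      rw [himg]
      simp only [Gmap]
      split_ifs <;> first
        | (exfalso; omega)
        | (simp only [Prod.mk.injEq]; exact ⟨by omega, by omega, by omega⟩)

private lemma GmemFG (n : ℕ) (x y z : ℤ) (h : PP (2*n) (x, y, z)) :
    QP n (Gmap (x, y, z)) ∧ Fmap (Gmap (x, y, z)) = (x, y, z) := by
  rw [PP_iff] at h
  obtain ⟨h1, h2, h3, h4, heq⟩ := h
  rw [show ((2*n : ℕ) : ℤ) = 2*(n:ℤ) from by push_cast; ring] at heq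
  by_cases hp : (x + z) % 2 = 0
  · -- s odd branch: x ≡ z (mod 2)
    obtain ⟨a, b, rfl, rfl⟩ : ∃ a b, x = a + b ∧ z = a - b :=
      ⟨(x+z)/2, (x-z)/2, by omega, by omega⟩
    have hdup : 2*(2*(n:ℤ)) = 2*(y*y - b*b - (a*a - a)) := by linear_combination heq
    have h2' : 2*(n:ℤ) = y*y - b*b - (a*a - a) :=
      mul_left_cancel₀ (by norm_num : (2:ℤ) ≠ 0) hdup
    obtain ⟨e, he⟩ := even_mul_pred a
    have hev : (y - b) % 2 = 0 :=
      parity_aux n y b (a*a - a) ⟨e, by linear_combination he⟩ h2'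
    obtain ⟨t, rfl⟩ : ∃ t, y = b + 2*t := ⟨(y - b)/2, by omega⟩
    by_cases gv : a ≤ t
    · have himg : Gmap (a+b, b+2*t, a-b) = (2*b + 2*t, 2*b + 2*t - a + 1, t - a) := by
        simp only [Gmap]
        split_ifs <;> first
          | (exfalso; omega)
          | (simp only [Prod.mk.injEq]; exact ⟨by omega, by omega, by omega⟩)
      rw [himg]
      constructor
      · rw [QP_iff]
        refine ⟨by omega, by omega, by omega, by omega, ?_⟩
        linear_combination heq
      · simp only [Fmap]
        split_ifs <;> first
          | (exfalso; omega)
          | (simp only [Prod.mk.injEq]; exact ⟨by omega, by omega, by omega⟩)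
    · have himg : Gmap (a+b, b+2*t, a-b) =
          (2*b + 4*t - 2*a + 1, 2*b + 2*t - a + 1, a - t - 1) := by
        simp only [Gmap]
        split_ifs <;> first
          | (exfalso; omega)
          | (simp only [Prod.mk.injEq]; exact ⟨by omega, by omega, by omega⟩)
      rw [himg]
      constructor
      · rw [QP_iff]
        refine ⟨by omega, by omega, by omega, by omega, ?_⟩
        linear_combination heq
      · simp only [Fmap]
        split_ifs <;> first
          | (exfalso; omega)
          | (simp only [Prod.mk.injEq]; exact ⟨by omega, by omega, by omega⟩)
  · -- s even branch: x + z odd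
    obtain ⟨a, b, rfl, rfl⟩ : ∃ a b, x = a + b + 1 ∧ z = a - b :=
      ⟨(x+z-1)/2, (x-z-1)/2, by omega, by omega⟩
    have hdup : 2*(2*(n:ℤ)) = 2*(y*y - a*a - (b*b + b)) := by linear_combination heq
    have h2' : 2*(n:ℤ) = y*y - a*a - (b*b + b) :=
      mul_left_cancel₀ (by norm_num : (2:ℤ) ≠ 0) hdup
    obtain ⟨e, he⟩ := even_mul_succ b
    have hev : (y - a) % 2 = 0 :=
      parity_aux n y a (b*b + b) ⟨e, by linear_combination he⟩ h2'
    obtain ⟨t, rfl⟩ : ∃ t, y = a + 2*t := ⟨(y - a)/2, by omega⟩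
    by_cases gb : b ≤ -1
    · by_cases gi : -b ≤ t
      · have himg : Gmap (a+b+1, a+2*t, a-b) = (2*a + 2*t, 2*a + 2*t + b + 1, t + b) := by
          simp only [Gmap]
          split_ifs <;> first
            | (exfalso; omega)
            | (simp only [Prod.mk.injEq]; exact ⟨by omega, by omega, by omega⟩)
        rw [himg]
        constructor
        · rw [QP_iff]
          refine ⟨by omega, by omega, by omega, by omega, ?_⟩
          linear_combination heq
        · simp only [Fmap]
          split_ifs <;> first
            | (exfalso; omega)
            | (simp only [Prod.mk.injEq]; exact ⟨by omega, by omega, by omega⟩)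
      · have himg : Gmap (a+b+1, a+2*t, a-b) = (2*t, 2*t + b + 1, a + t + b) := by
          simp only [Gmap]
          split_ifs <;> first
            | (exfalso; omega)
            | (simp only [Prod.mk.injEq]; exact ⟨by omega, by omega, by omega⟩)
        rw [himg]
        constructor
        · rw [QP_iff]
          refine ⟨by omega, by omega, by omega, by omega, ?_⟩
          linear_combination heq
        · simp only [Fmap]
          split_ifs <;> first
            | (exfalso; omega)
            | (simp only [Prod.mk.injEq]; exact ⟨by omega, by omega, by omega⟩)
    · by_cases giii : b < t
      · have himg : Gmap (a+b+1, a+2*t, a-b) = (2*t, 2*t - b, a + t - b - 1) := by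
          simp only [Gmap]
          split_ifs <;> first
            | (exfalso; omega)
            | (simp only [Prod.mk.injEq]; exact ⟨by omega, by omega, by omega⟩)
        rw [himg]
        constructor
        · rw [QP_iff]
          refine ⟨by omega, by omega, by omega, by omega, ?_⟩
          linear_combination heq
        · simp only [Fmap]
          split_ifs <;> first
            | (exfalso; omega)
            | (simp only [Prod.mk.injEq]; exact ⟨by omega, by omega, by omega⟩)
      · have himg : Gmap (a+b+1, a+2*t, a-b) =
            (2*a + 4*t - 2*b - 1, 2*a + 2*t - b, b - t) := by
          simp only [Gmap]
          split_ifs <;> first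
            | (exfalso; omega)
            | (simp only [Prod.mk.injEq]; exact ⟨by omega, by omega, by omega⟩)
        rw [himg]
        constructor
        · rw [QP_iff]
          refine ⟨by omega, by omega, by omega, by omega, ?_⟩
          linear_combination heq
        · simp only [Fmap]
          split_ifs <;> first
            | (exfalso; omega)
            | (simp only [Prod.mk.injEq]; exact ⟨by omega, by omega, by omega⟩)

private noncomputable def qpEquiv (n : ℕ) :
    {p : ℤ × ℤ × ℤ // QP n p} ≃ {p : ℤ × ℤ × ℤ // PP (2*n) p} where
  toFun q := ⟨Fmap q.1, by
    obtain ⟨⟨l, m, k⟩, hq⟩ := q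
    exact Fmem n l m k hq⟩
  invFun p := ⟨Gmap p.1, by
    obtain ⟨⟨x, y, z⟩, hp⟩ := p
    exact (GmemFG n x y z hp).1⟩
  left_inv := by
    rintro ⟨⟨l, m, k⟩, hq⟩
    exact Subtype.ext (GFlem n l m k hq)
  right_inv := by
    rintro ⟨⟨x, y, z⟩, hp⟩
    exact Subtype.ext ((GmemFG n x y z hp).2)

/-- `Q(n) = P(2n)` for all positive integers `n`. -/
theorem stmt_19 (n : ℕ) (hn : 0 < n) : Qcount n = Pcount (2 * n) := by
  have h1 : Qcount n = Nat.card {p : ℤ × ℤ × ℤ // QP n p} := rfl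
  have h2 : Pcount (2 * n) = Nat.card {p : ℤ × ℤ × ℤ // PP (2*n) p} := rfl
  rw [h1, h2]
  exact Nat.card_congr (qpEquiv n)
end
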